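/- Let (M, Δ_∞) be a metric space, c > 0, d a positive integer, and let m₁,…,m_n ∈ M and z₁,…,z_n ∈ ℝ^d satisfy ‖z_i − z_j‖ ≤ c · Δ_∞(m_i, m_j) for every 1 ≤ i, j ≤ n. Then there exists a function F : M → ℝ^d with F(m_i) = z_i for i = 1,…,n such that the function D̄(m, m′) = ‖F(m) − F(m′)‖ satisfies |D̄(m₁,m₂) − D̄(m₁′,m₂′)| ≤ c√(3d) · (Δ_∞(m₁,m₁′)² + Δ_∞(m₂,m₂′)²)^{1/2} for every m₁, m₂, m₁′, m₂′ ∈ M. -/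

import Mathlib

lemma euclid_coord_le {d : ℕ} (x : EuclideanSpace ℝ (Fin d)) (k : Fin d) :
    |x k| ≤ ‖x‖ := by
  rw [EuclideanSpace.norm_eq, ← Real.sqrt_sq (abs_nonneg (x k)), sq_abs]
  apply Real.sqrt_le_sqrt
  calc x k ^ 2 = ‖x k‖ ^ 2 := by rw [Real.norm_eq_abs, sq_abs]
  _ ≤ ∑ i, ‖x i‖ ^ 2 := Finset.single_le_sum (f := fun i => ‖x i‖ ^ 2)
      (fun i _ => sq_nonneg _) (Finset.mem_univ k)

/-- Interpolation of a configuration `z₁, …, z_n ⊂ ℝ^d` satisfying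
`‖z_i - z_j‖ ≤ c · dist(m_i, m_j)` by a function `F : M → ℝ^d` whose associated
pseudometric `D̄(m, m') = ‖F m - F m'‖` is `c√(3d)`-Lipschitz with respect to the
`ℓ²` product metric on `M × M`. -/
theorem lipschitz_configuration_interpolation {M : Type*} [MetricSpace M]
    (c : ℝ) (hc : 0 < c) (d : ℕ) (hd : 0 < d)
    (n : ℕ) (m : Fin n → M) (z : Fin n → EuclideanSpace ℝ (Fin d))
    (h : ∀ i j, ‖z i - z j‖ ≤ c * dist (m i) (m j)) :
    ∃ F : M → EuclideanSpace ℝ (Fin d), (∀ i, F (m i) = z i) ∧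
      ∀ m₁ m₂ m₁' m₂' : M,
        |‖F m₁ - F m₂‖ - ‖F m₁' - F m₂'‖| ≤
          c * Real.sqrt (3 * d) * Real.sqrt (dist m₁ m₁' ^ 2 + dist m₂ m₂' ^ 2) := by
  classical
  -- per-coordinate function on the range of m
  set f : Fin d → M → ℝ := fun k x =>
    if hx : ∃ i, m i = x then z hx.choose k else 0 with hf
  have hfval : ∀ (k : Fin d) (i : Fin n), f k (m i) = z i k := by
    intro k i
    have hx : ∃ j, m j = m i := ⟨i, rfl⟩
    have hchoose : m hx.choose = m i := hx.choose_spec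
    have : z hx.choose = z i := by
      have := h hx.choose i
      rw [hchoose, dist_self, mul_zero] at this
      have := le_antisymm this (norm_nonneg _)
      rwa [norm_sub_eq_zero_iff] at this
    simp only [hf, dif_pos hx, this]
  -- each coordinate is c-Lipschitz on the range
  have hlip : ∀ k : Fin d, LipschitzOnWith c.toNNReal (f k) (Set.range m) := by
    intro k
    apply LipschitzOnWith.of_dist_le_mul
    rintro x ⟨i, rfl⟩ y ⟨j, rfl⟩
    rw [hfval, hfval, Real.dist_eq]
    calc |z i k - z j k| = |(z i - z j) k| := by simp [PiLp.sub_apply]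
    _ ≤ ‖z i - z j‖ := euclid_coord_le _ _
    _ ≤ c * dist (m i) (m j) := h i j
    _ = (c.toNNReal : ℝ) * dist (m i) (m j) := by
        rw [Real.coe_toNNReal _ hc.le]
  choose g hg hgeq using fun k => (hlip k).extend_real
  set F : M → EuclideanSpace ℝ (Fin d) := fun x => WithLp.toLp 2 (fun k => g k x) with hF
  -- F is c√d - Lipschitz
  have hFlip : ∀ x y : M, ‖F x - F y‖ ≤ c * Real.sqrt d * dist x y := by
    intro x y
    rw [EuclideanSpace.norm_eq]
    have : ∀ k : Fin d, ‖(F x - F y) k‖ ^ 2 ≤ (c * dist x y) ^ 2 := by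
      intro k
      have hk : ‖(F x - F y) k‖ = dist (g k x) (g k y) := by
        simp [hF, PiLp.sub_apply, Real.dist_eq, Real.norm_eq_abs]
      rw [hk]
      have := (hg k).dist_le_mul x y
      rw [Real.coe_toNNReal _ hc.le] at this
      exact pow_le_pow_left₀ dist_nonneg this 2
    calc Real.sqrt (∑ k, ‖(F x - F y) k‖ ^ 2)
        ≤ Real.sqrt (∑ _k : Fin d, (c * dist x y) ^ 2) := by
          apply Real.sqrt_le_sqrt
          exact Finset.sum_le_sum fun k _ => this k
      _ = Real.sqrt (d * (c * dist x y) ^ 2) := by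
          rw [Finset.sum_const, Finset.card_univ, Fintype.card_fin, nsmul_eq_mul]
      _ = Real.sqrt d * (c * dist x y) := by
          rw [Real.sqrt_mul (Nat.cast_nonneg d),
            Real.sqrt_sq (by positivity)]
      _ = c * Real.sqrt d * dist x y := by ring
  refine ⟨F, ?_, ?_⟩
  · intro i
    ext k
    have := (hgeq k ⟨i, rfl⟩).symm
    simpa [hF, hfval] using this
  · intro m₁ m₂ m₁' m₂'
    set D₁ := dist m₁ m₁'
    set D₂ := dist m₂ m₂'
    have step1 : |‖F m₁ - F m₂‖ - ‖F m₁' - F m₂'‖| ≤ ‖F m₁ - F m₁'‖ + ‖F m₂ - F m₂'‖ := by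
      calc |‖F m₁ - F m₂‖ - ‖F m₁' - F m₂'‖|
          ≤ ‖(F m₁ - F m₂) - (F m₁' - F m₂')‖ := abs_norm_sub_norm_le _ _
        _ = ‖(F m₁ - F m₁') - (F m₂ - F m₂')‖ := by rw [sub_sub_sub_comm]
        _ ≤ ‖F m₁ - F m₁'‖ + ‖F m₂ - F m₂'‖ := norm_sub_le _ _
    have step2 : ‖F m₁ - F m₁'‖ + ‖F m₂ - F m₂'‖ ≤ c * Real.sqrt d * (D₁ + D₂) := by
      have := hFlip m₁ m₁'
      have := hFlip m₂ m₂'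
      nlinarith [hFlip m₁ m₁', hFlip m₂ m₂']
    have step3 : D₁ + D₂ ≤ Real.sqrt 2 * Real.sqrt (D₁ ^ 2 + D₂ ^ 2) := by
      rw [← Real.sqrt_mul (by norm_num)]
      have h1 : (0:ℝ) ≤ D₁ := dist_nonneg
      have h2 : (0:ℝ) ≤ D₂ := dist_nonneg
      have : (D₁ + D₂) ^ 2 ≤ 2 * (D₁ ^ 2 + D₂ ^ 2) := by nlinarith [sq_nonneg (D₁ - D₂)]
      calc D₁ + D₂ = Real.sqrt ((D₁ + D₂) ^ 2) := (Real.sqrt_sq (by positivity)).symm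
        _ ≤ Real.sqrt (2 * (D₁ ^ 2 + D₂ ^ 2)) := Real.sqrt_le_sqrt this
    have step4 : c * Real.sqrt d * (Real.sqrt 2 * Real.sqrt (D₁ ^ 2 + D₂ ^ 2))
        ≤ c * Real.sqrt (3 * d) * Real.sqrt (D₁ ^ 2 + D₂ ^ 2) := by
      have hsq : Real.sqrt d * Real.sqrt 2 ≤ Real.sqrt (3 * d) := by
        rw [← Real.sqrt_mul (Nat.cast_nonneg d)]
        apply Real.sqrt_le_sqrt
        have : (0:ℝ) ≤ d := Nat.cast_nonneg d
        nlinarith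
      have hnn : (0:ℝ) ≤ Real.sqrt (D₁ ^ 2 + D₂ ^ 2) := Real.sqrt_nonneg _
      calc c * Real.sqrt d * (Real.sqrt 2 * Real.sqrt (D₁ ^ 2 + D₂ ^ 2))
          = c * (Real.sqrt d * Real.sqrt 2) * Real.sqrt (D₁ ^ 2 + D₂ ^ 2) := by ring
        _ ≤ c * Real.sqrt (3 * d) * Real.sqrt (D₁ ^ 2 + D₂ ^ 2) := by
            apply mul_le_mul_of_nonneg_right _ hnn
            exact mul_le_mul_of_nonneg_left hsq hc.le
    calc |‖F m₁ - F m₂‖ - ‖F m₁' - F m₂'‖|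
        ≤ c * Real.sqrt d * (D₁ + D₂) := step1.trans step2
      _ ≤ c * Real.sqrt d * (Real.sqrt 2 * Real.sqrt (D₁ ^ 2 + D₂ ^ 2)) := by
          apply mul_le_mul_of_nonneg_left step3 (by positivity)
      _ ≤ c * Real.sqrt (3 * d) * Real.sqrt (D₁ ^ 2 + D₂ ^ 2) := step4
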